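/- For any natural numbers n and k, any family of linear functionals f : Fin k → (EuclideanSpace ℝ (Fin n) →ₗ[ℝ] ℝ), and any b : Fin k → ℝ, the polyhedron {x ∈ EuclideanSpace ℝ (Fin n) : ∀ i, f i x ≤ b i} has finitely many extreme points (its set of extreme points over ℝ is finite). -/

import Mathlib

/-- A polyhedron in `EuclideanSpace ℝ (Fin n)`, i.e. a set defined by finitely many
linear inequalities, has finitely many extreme points. -/
theorem polyhedron_extremePoints_finite (n k : ℕ)
    (f : Fin k → (EuclideanSpace ℝ (Fin n) →ₗ[ℝ] ℝ)) (b : Fin k → ℝ) :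
    (({x | ∀ i, f i x ≤ b i} : Set (EuclideanSpace ℝ (Fin n))).extremePoints ℝ).Finite := by
  set S : Set (EuclideanSpace ℝ (Fin n)) := {x | ∀ i, f i x ≤ b i} with hS
  -- Key claim: if x is extreme and d vanishes on all active constraints, then d = 0.
  have key : ∀ x ∈ S.extremePoints ℝ, ∀ d : EuclideanSpace ℝ (Fin n),
      (∀ i, f i x = b i → f i d = 0) → d = 0 := by
    intro x hx d hd
    by_contra hd0
    obtain ⟨hxS, hext⟩ := hx
    have hev : ∀ᶠ t in nhds (0 : ℝ), ∀ i, f i (x + t • d) ≤ b i := by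
      rw [Filter.eventually_all]
      intro i
      rcases eq_or_lt_of_le (hxS i) with heq | hlt
      · filter_upwards with t
        simp [map_add, map_smul, hd i heq, heq]
      · have hc : Continuous fun t : ℝ => f i (x + t • d) := by
          have : (fun t : ℝ => f i (x + t • d)) = fun t => f i x + t * f i d := by
            funext t; simp [map_add, map_smul, smul_eq_mul]
          rw [this]
          exact continuous_const.add (continuous_id.mul continuous_const)
        have : (fun t : ℝ => f i (x + t • d)) 0 < b i := by simpa using hlt
        have := hc.continuousAt (x := (0:ℝ))
        exact (this.eventually_lt continuousAt_const (by simpa using hlt)).mono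
          fun t ht => le_of_lt ht
    obtain ⟨ε, hε, hball⟩ := Metric.eventually_nhds_iff_ball.mp hev
    set t := ε / 2 with ht
    have htpos : (0:ℝ) < t := by positivity
    have htmem : t ∈ Metric.ball (0:ℝ) ε := by
      rw [Metric.mem_ball, Real.dist_eq, sub_zero, abs_of_pos htpos]
      rw [ht]; linarith
    have htmem' : -t ∈ Metric.ball (0:ℝ) ε := by
      rw [Metric.mem_ball, Real.dist_eq, sub_zero, abs_of_neg (by linarith : -t < 0), neg_neg]
      rw [ht]; linarith
    have h1 : x + t • d ∈ S := fun i => hball t htmem i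
    have h2 : x - t • d ∈ S := by
      have h := fun i => hball (-t) htmem' i
      have heq : x + (-t) • d = x - t • d := by module
      rw [heq] at h
      exact h
    have hmem : x ∈ openSegment ℝ (x + t • d) (x - t • d) := by
      refine ⟨1/2, 1/2, by norm_num, by norm_num, by norm_num, ?_⟩
      module
    have := hext h1 h2 hmem
    have : t • d = 0 := by
      have h := this
      have : x + t • d = x + 0 := by simpa using h
      exact add_left_cancel this
    rcases smul_eq_zero.mp this with h | h
    · exact absurd h (ne_of_gt htpos)
    · exact hd0 h
  -- Injectivity of the active-set map on extreme points.
  have hinj : Set.InjOn (fun x => {i | f i x = b i}) (S.extremePoints ℝ) := by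
    intro x hx y hy hxy
    have hd : ∀ i, f i x = b i → f i (y - x) = 0 := by
      intro i hi
      have hiy : f i y = b i := by
        have hxy' : {i | f i x = b i} = {i | f i y = b i} := hxy
        have : i ∈ {i | f i x = b i} := hi
        rw [hxy'] at this
        exact this
      simp [map_sub, hi, hiy]
    have := key x hx (y - x) hd
    exact (sub_eq_zero.mp this).symm
  exact Set.Finite.of_finite_image (Set.toFinite _) hinj
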